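/- Let Z be a nonempty finite set and let U_1, U_2 ⊆ C_Z be clopen subsets with U_1 ∩ U_2 ≠ ∅. Then the subgroup of the Higman–Thompson group V_Z generated by RiSt_{V_Z}(U_1) and RiSt_{V_Z}(U_2) equals RiSt_{V_Z}(U_1 ∪ U_2). -/

import Mathlib

noncomputable section

/-! ### Generalities: the group of self-homeomorphisms -/

instance homeoGroup {X : Type*} [TopologicalSpace X] : Group (X ≃ₜ X) where
  mul f g := g.trans f
  one := Homeomorph.refl X
  inv := Homeomorph.symm
  mul_assoc a b c := Homeomorph.ext fun _ => rfl
  one_mul a := Homeomorph.ext fun _ => rfl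
  mul_one a := Homeomorph.ext fun _ => rfl
  inv_mul_cancel a := Homeomorph.ext a.symm_apply_apply

/-! ### Homeomorphisms of a product with a discrete factor -/

theorem cont_fibered {X Y Z : Type*} [TopologicalSpace X] [TopologicalSpace Y]
    [DiscreteTopology Y] [TopologicalSpace Z] (f : X → Y → Z) (hf : ∀ y, Continuous (f · y)) :
    Continuous (fun p : X × Y => f p.1 p.2) := by
  rw [continuous_iff_continuousAt]
  rintro ⟨x, y⟩
  have hmem : {p : X × Y | p.2 = y} ∈ nhds (x, y) := by
    have ho : IsOpen {p : X × Y | p.2 = y} := by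
      have h : ({p : X × Y | p.2 = y}) = Prod.snd ⁻¹' {y} := rfl
      rw [h]; exact (isOpen_discrete _).preimage continuous_snd
    exact ho.mem_nhds rfl
  refine ContinuousAt.congr (((hf y).comp continuous_fst).continuousAt) ?_
  filter_upwards [hmem] with p hp
  simp [hp]

/-- The homeomorphism of `X × Y`, `Y` discrete, acting on each fiber `X × {y}`
by the homeomorphism `F y`. -/
def fiberedHomeo {X Y : Type*} [TopologicalSpace X] [TopologicalSpace Y] [DiscreteTopology Y]
    (F : Y → X ≃ₜ X) : (X × Y) ≃ₜ (X × Y) where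
  toEquiv := Equiv.prodCongrLeft fun y => (F y).toEquiv
  continuous_toFun := by
    refine Continuous.prodMk ?_ continuous_snd
    exact cont_fibered (fun x y => F y x) (fun y => (F y).continuous)
  continuous_invFun := by
    refine Continuous.prodMk ?_ continuous_snd
    exact cont_fibered (fun x y => (F y).symm x) (fun y => (F y).symm.continuous)

/-- The homeomorphism of `X × Y`, `Y` discrete, permuting the fibers according to a
permutation of `Y` and acting trivially in the `X`-coordinate. -/
def basePermHomeo {X Y : Type*} [TopologicalSpace X] [TopologicalSpace Y] [DiscreteTopology Y]
    (e : Equiv.Perm Y) : (X × Y) ≃ₜ (X × Y) where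
  toEquiv := Equiv.prodCongr (Equiv.refl X) e
  continuous_toFun :=
    continuous_fst.prodMk (continuous_of_discreteTopology.comp continuous_snd)
  continuous_invFun :=
    continuous_fst.prodMk (continuous_of_discreteTopology.comp continuous_snd)

/-! ### The Cantor set -/

/-- The Cantor set `{0,1}^ℕ`. -/
abbrev Cantor : Type := ℕ → Bool

/-- Prepending a finite word to an element of the Cantor set. -/
def wordAppend (w : List Bool) (ξ : Cantor) : Cantor :=
  fun n => if h : n < w.length then w[n] else ξ (n - w.length)

/-- A dyadic partition set: a finite set of binary words whose cylinders partition
the Cantor set. -/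
def IsDyadicPartition (A : Finset (List Bool)) : Prop :=
  ∀ ξ : Cantor, ∃! w : List Bool, w ∈ A ∧ ∃ ξ' : Cantor, wordAppend w ξ' = ξ

/-- The defining condition for elements of Thompson's group `V`: a homeomorphism of the
Cantor set given by prefix replacement along a bijection of two dyadic partition sets. -/
def IsThompsonVMap (γ : Cantor ≃ₜ Cantor) : Prop :=
  ∃ (A B : Finset (List Bool)) (f : List Bool → List Bool),
    IsDyadicPartition A ∧ IsDyadicPartition B ∧ A.card = B.card ∧ Set.BijOn f A B ∧
    ∀ w ∈ A, ∀ ξ : Cantor, γ (wordAppend w ξ) = wordAppend (f w) ξ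

/-- Thompson's group `V`, as a group of homeomorphisms of the Cantor set. -/
def ThompsonV : Subgroup (Cantor ≃ₜ Cantor) :=
  Subgroup.closure {γ | IsThompsonVMap γ}

/-! ### The Higman–Thompson groups `V_Z` and rigid stabilizers -/

/-- A dyadic partition set of `C_Z`, the disjoint union of copies of the Cantor set
indexed by `Z`. -/
def IsDyadicPartitionZ (Z : Type*) (A : Finset (List Bool × Z)) : Prop :=
  ∀ p : Cantor × Z, ∃! q : List Bool × Z,
    q ∈ A ∧ q.2 = p.2 ∧ ∃ ξ' : Cantor, wordAppend q.1 ξ' = p.1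

/-- The Higman–Thompson group `V_Z`, consisting of the homeomorphisms of `C_Z` given by
prefix replacement along a bijection of two dyadic partition sets of the same cardinality. -/
def HigmanThompsonV (Z : Type*) [TopologicalSpace Z] :
    Subgroup ((Cantor × Z) ≃ₜ (Cantor × Z)) :=
  Subgroup.closure {γ | ∃ (A B : Finset (List Bool × Z)) (f : List Bool × Z → List Bool × Z),
    IsDyadicPartitionZ Z A ∧ IsDyadicPartitionZ Z B ∧ A.card = B.card ∧
    Set.BijOn f A B ∧
    ∀ q ∈ A, ∀ ξ : Cantor, γ (wordAppend q.1 ξ, q.2) = (wordAppend (f q).1 ξ, (f q).2)}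

/-- The rigid stabilizer `RiSt_G(U)` of a subset `U` in a group `G` of homeomorphisms:
the subgroup of elements of `G` fixing the complement of `U` pointwise. -/
def rigidStabilizer {X : Type*} [TopologicalSpace X] (G : Subgroup (X ≃ₜ X)) (U : Set X) :
    Subgroup (X ≃ₜ X) where
  carrier := {γ | γ ∈ G ∧ ∀ x ∉ U, γ x = x}
  one_mem' := ⟨G.one_mem, fun _ _ => rfl⟩
  mul_mem' := by
    rintro a b ⟨haG, ha⟩ ⟨hbG, hb⟩
    refine ⟨G.mul_mem haG hbG, fun x hx => ?_⟩
    have h : (a * b) x = a (b x) := rfl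
    rw [h, hb x hx, ha x hx]
  inv_mem' := by
    rintro a ⟨haG, ha⟩
    refine ⟨G.inv_mem haG, fun x hx => ?_⟩
    have h : a⁻¹ (a x) = x := a.symm_apply_apply x
    rwa [ha x hx] at h

open scoped Classical
set_option linter.unusedSectionVars false
set_option linter.unnecessarySimpa false

namespace RSU

variable {Z : Type*}

theorem wordAppend_append (w u : List Bool) (ξ : Cantor) :
    wordAppend (w ++ u) ξ = wordAppend w (wordAppend u ξ) := by
  funext n
  simp only [wordAppend, List.length_append]
  by_cases h1 : n < w.length
  · rw [dif_pos (by omega), dif_pos h1, List.getElem_append_left h1]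
  · by_cases h2 : n < w.length + u.length
    · rw [dif_pos h2, dif_neg h1, dif_pos (by omega), List.getElem_append_right (by omega)]
    · rw [dif_neg h2, dif_neg h1, dif_neg (by omega)]
      congr 1; omega

theorem wordAppend_lt (w : List Bool) (ξ : Cantor) {n : ℕ} (h : n < w.length) :
    wordAppend w ξ n = w[n] := dif_pos h

theorem wordAppend_ge (w : List Bool) (ξ : Cantor) {n : ℕ} (h : ¬ n < w.length) :
    wordAppend w ξ n = ξ (n - w.length) := dif_neg h

/-- the tail after removing a prefix of length `|w|` -/
def tailOf (w : List Bool) (x : Cantor) : Cantor := fun k => x (k + w.length)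

theorem tailOf_wordAppend (w : List Bool) (ξ : Cantor) : tailOf w (wordAppend w ξ) = ξ := by
  funext k
  simp only [tailOf, wordAppend]
  rw [dif_neg (by omega)]
  congr 1; omega

theorem wordAppend_right_inj {w : List Bool} {ξ ξ' : Cantor}
    (h : wordAppend w ξ = wordAppend w ξ') : ξ = ξ' := by
  rw [← tailOf_wordAppend w ξ, h, tailOf_wordAppend]

theorem wordAppend_tailOf {w : List Bool} {x : Cantor}
    (h : ∀ i (hi : i < w.length), x i = w[i]) : wordAppend w (tailOf w x) = x := by
  funext n
  by_cases hn : n < w.length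
  · rw [wordAppend_lt _ _ hn]; exact (h n hn).symm
  · rw [wordAppend_ge _ _ hn]
    simp only [tailOf]; congr 1; omega

/-- embedding of the Cantor set as the cylinder of `q` -/
def emb (q : List Bool × Z) (ξ : Cantor) : Cantor × Z := (wordAppend q.1 ξ, q.2)

/-- the cylinder of `q` -/
def cyl (q : List Bool × Z) : Set (Cantor × Z) :=
  {p | q.2 = p.2 ∧ ∃ ξ' : Cantor, wordAppend q.1 ξ' = p.1}

theorem mem_cyl_iff_emb {q : List Bool × Z} {p : Cantor × Z} :
    p ∈ cyl q ↔ ∃ ξ, emb q ξ = p := by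
  constructor
  · rintro ⟨h2, ξ, h1⟩; exact ⟨ξ, Prod.ext h1 h2⟩
  · rintro ⟨ξ, rfl⟩; exact ⟨rfl, ξ, rfl⟩

theorem emb_mem_cyl (q : List Bool × Z) (ξ : Cantor) : emb q ξ ∈ cyl q :=
  mem_cyl_iff_emb.2 ⟨ξ, rfl⟩

theorem cyl_nonempty (q : List Bool × Z) : (cyl q).Nonempty :=
  ⟨emb q (fun _ => false), emb_mem_cyl _ _⟩

theorem mem_cyl_iff {q : List Bool × Z} {p : Cantor × Z} :
    p ∈ cyl q ↔ p.2 = q.2 ∧ ∀ i (hi : i < q.1.length), p.1 i = q.1[i] := by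
  constructor
  · rintro ⟨h2, ξ, h1⟩
    exact ⟨h2.symm, fun i hi => by rw [← h1, wordAppend_lt _ _ hi]⟩
  · rintro ⟨h2, h1⟩
    exact ⟨h2.symm, tailOf q.1 p.1, wordAppend_tailOf h1⟩

theorem mem_cyl_of_mem_cyl_append {q : List Bool × Z} {u : List Bool} {p : Cantor × Z}
    (h : p ∈ cyl (q.1 ++ u, q.2)) : p ∈ cyl q := by
  rw [mem_cyl_iff] at h ⊢
  refine ⟨h.1, fun i hi => ?_⟩
  rw [h.2 i (by simp; omega), List.getElem_append_left hi]

theorem emb_append (q : List Bool × Z) (u : List Bool) (ξ : Cantor) :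
    emb (q.1 ++ u, q.2) ξ = emb q (wordAppend u ξ) := by
  simp [emb, wordAppend_append]

/-- if two cylinders meet, the shorter word is a prefix of the longer -/
theorem prefix_of_mem_cyl {q q' : List Bool × Z} {p : Cantor × Z}
    (h : p ∈ cyl q) (h' : p ∈ cyl q') (hle : q.1.length ≤ q'.1.length) :
    q.2 = q'.2 ∧ q.1 <+: q'.1 := by
  rw [mem_cyl_iff] at h h'
  refine ⟨h.1.symm.trans h'.1, ?_⟩
  refine List.prefix_iff_eq_take.2 (List.ext_getElem (by simp [List.length_take]; omega) ?_).symm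
  intro i h1 h2
  rw [List.getElem_take]
  rw [← h.2 i (by omega), h'.2 i (by omega)]

theorem cyl_disjoint {q q' : List Bool × Z}
    (h : ¬ (q.2 = q'.2 ∧ (q.1 <+: q'.1 ∨ q'.1 <+: q.1))) :
    Disjoint (cyl q) (cyl q') := by
  rw [Set.disjoint_left]
  intro p hp hp'
  rcases le_total q.1.length q'.1.length with hle | hle
  · obtain ⟨h2, h1⟩ := prefix_of_mem_cyl hp hp' hle
    exact h ⟨h2, Or.inl h1⟩
  · obtain ⟨h2, h1⟩ := prefix_of_mem_cyl hp' hp hle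
    exact h ⟨h2.symm, Or.inr h1⟩

end RSU
namespace RSU

variable {Z : Type*}

/-- family of cylinders partitioning a set -/
def CylFam (F : Finset (List Bool × Z)) (P : Set (Cantor × Z)) : Prop :=
  (∀ q ∈ F, cyl q ⊆ P) ∧ (∀ p ∈ P, ∃! q, q ∈ F ∧ p ∈ cyl q)

theorem isDyadicPartitionZ_iff {A : Finset (List Bool × Z)} :
    IsDyadicPartitionZ Z A ↔ ∀ p : Cantor × Z, ∃! q, q ∈ A ∧ p ∈ cyl q := Iff.rfl

theorem isDyadic_of_cylFam_univ {A : Finset (List Bool × Z)}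
    (h : CylFam A (Set.univ : Set (Cantor × Z))) : IsDyadicPartitionZ Z A :=
  fun p => h.2 p (Set.mem_univ p)

theorem cylFam_union {F G : Finset (List Bool × Z)} {P Q : Set (Cantor × Z)}
    (hF : CylFam F P) (hG : CylFam G Q) (hd : Disjoint P Q) : CylFam (F ∪ G) (P ∪ Q) := by
  constructor
  · intro q hq
    rcases Finset.mem_union.1 hq with h | h
    · exact (hF.1 q h).trans (Set.subset_union_left)
    · exact (hG.1 q h).trans (Set.subset_union_right)
  · intro p hp
    have key : ∀ q, q ∈ F ∪ G ∧ p ∈ cyl q → (p ∈ P → q ∈ F ∧ p ∈ cyl q) ∧ (p ∈ Q → q ∈ G ∧ p ∈ cyl q) := by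
      rintro q ⟨hq, hpq⟩
      rcases Finset.mem_union.1 hq with h | h
      · have hP : p ∈ P := hF.1 q h hpq
        exact ⟨fun _ => ⟨h, hpq⟩, fun hQ => absurd hP (Set.disjoint_right.1 hd hQ)⟩
      · have hQ : p ∈ Q := hG.1 q h hpq
        exact ⟨fun hP => absurd hQ (Set.disjoint_left.1 hd hP), fun _ => ⟨h, hpq⟩⟩
    rcases hp with hp | hp
    · obtain ⟨q, hq, hu⟩ := hF.2 p hp
      exact ⟨q, ⟨Finset.mem_union_left _ hq.1, hq.2⟩, fun r hr => hu r ((key r hr).1 hp)⟩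
    · obtain ⟨q, hq, hu⟩ := hG.2 p hp
      exact ⟨q, ⟨Finset.mem_union_right _ hq.1, hq.2⟩, fun r hr => hu r ((key r hr).2 hp)⟩

theorem cylFam_disjoint_finset {F G : Finset (List Bool × Z)} {P Q : Set (Cantor × Z)}
    (hF : CylFam F P) (hG : CylFam G Q) (hd : Disjoint P Q) : Disjoint F G := by
  rw [Finset.disjoint_left]
  intro q hqF hqG
  obtain ⟨p, hp⟩ := cyl_nonempty q
  exact Set.disjoint_left.1 hd (hF.1 q hqF hp) (hG.1 q hqG hp)

theorem cylFam_nonempty {F : Finset (List Bool × Z)} {P : Set (Cantor × Z)}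
    (hF : CylFam F P) (hP : P.Nonempty) : F.Nonempty := by
  obtain ⟨p, hp⟩ := hP
  obtain ⟨q, hq, -⟩ := hF.2 p hp
  exact ⟨q, hq.1⟩

/-- the words of length `n` -/
def fullWords (n : ℕ) : Finset (List Bool) :=
  (Finset.univ : Finset (Fin n → Bool)).image List.ofFn

theorem mem_fullWords {n : ℕ} {w : List Bool} : w ∈ fullWords n ↔ w.length = n := by
  simp only [fullWords, Finset.mem_image, Finset.mem_univ, true_and]
  constructor
  · rintro ⟨g, rfl⟩; simp
  · rintro rfl
    exact ⟨fun i => w[(i : ℕ)], (List.ext_getElem (by simp) (by simp)).symm⟩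

variable [Fintype Z]

/-- level-n partition -/
def levelPart (Z : Type*) [Fintype Z] (n : ℕ) : Finset (List Bool × Z) :=
  fullWords n ×ˢ Finset.univ

theorem mem_levelPart {n : ℕ} {q : List Bool × Z} :
    q ∈ levelPart Z n ↔ q.1.length = n := by
  simp [levelPart, mem_fullWords]

theorem cylFam_levelPart (n : ℕ) : CylFam (levelPart Z n) (Set.univ : Set (Cantor × Z)) := by
  constructor
  · exact fun q _ => Set.subset_univ _
  · intro p _
    refine ⟨(List.ofFn (fun i : Fin n => p.1 i), p.2), ⟨?_, ?_⟩, ?_⟩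
    · rw [mem_levelPart]; simp
    · rw [mem_cyl_iff]
      refine ⟨rfl, fun i hi => ?_⟩
      simp only [List.length_ofFn] at hi
      simp [List.getElem_ofFn]
    · rintro q ⟨hq, hpq⟩
      rw [mem_levelPart] at hq
      rw [mem_cyl_iff] at hpq
      refine Prod.ext ?_ hpq.1.symm
      refine List.ext_getElem (by simp [hq]) ?_
      intro i h1 h2
      simp only [List.getElem_ofFn]
      exact (hpq.2 i (by omega)).symm

theorem isDyadic_levelPart (n : ℕ) : IsDyadicPartitionZ Z (levelPart Z n) :=
  isDyadic_of_cylFam_univ (cylFam_levelPart n)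

end RSU
namespace RSU

variable {Z : Type*} [TopologicalSpace Z] [DiscreteTopology Z]

theorem isClopen_cyl (q : List Bool × Z) : IsClopen (cyl q : Set (Cantor × Z)) := by
  have : (cyl q : Set (Cantor × Z)) =
      (Prod.snd ⁻¹' {q.2}) ∩ ⋂ i : Fin q.1.length, (fun p : Cantor × Z => p.1 (i : ℕ)) ⁻¹' {q.1[(i : ℕ)]} := by
    ext p
    rw [mem_cyl_iff]
    simp only [Set.mem_inter_iff, Set.mem_preimage, Set.mem_singleton_iff, Set.mem_iInter]
    constructor
    · rintro ⟨h2, h1⟩; exact ⟨h2, fun i => h1 i i.2⟩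
    · rintro ⟨h2, h1⟩; exact ⟨h2, fun i hi => h1 ⟨i, hi⟩⟩
  rw [this]
  refine IsClopen.inter ((isClopen_discrete _).preimage continuous_snd) ?_
  refine isClopen_iInter_of_finite fun i => ?_
  exact (isClopen_discrete _).preimage ((continuous_apply (i : ℕ)).comp continuous_fst)

theorem isOpen_cyl (q : List Bool × Z) : IsOpen (cyl q : Set (Cantor × Z)) :=
  (isClopen_cyl q).2

variable [Fintype Z]

/-- membership in a clopen set is determined by an initial segment -/
theorem exists_level_of_isClopen {P : Set (Cantor × Z)} (hP : IsClopen P) :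
    ∃ n : ℕ, ∀ p p' : Cantor × Z, (∀ i < n, p.1 i = p'.1 i) → p.2 = p'.2 → p ∈ P → p' ∈ P := by
  -- each point of P has a cylinder neighborhood inside P
  have key : ∀ x ∈ P, ∃ n : ℕ, {y : Cantor × Z | (∀ i < n, y.1 i = x.1 i) ∧ y.2 = x.2} ⊆ P := by
    intro x hx
    have hnx : P ∈ nhds x := hP.2.mem_nhds hx
    rw [nhds_prod_eq, Filter.mem_prod_iff] at hnx
    obtain ⟨s, hs, t, ht, hst⟩ := hnx
    rw [nhds_pi, Filter.mem_pi] at hs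
    obtain ⟨I, hIf, f, hf, hfs⟩ := hs
    obtain ⟨n, hn⟩ := hIf.bddAbove
    refine ⟨n + 1, fun y hy => ?_⟩
    refine hst ⟨hfs fun i hi => ?_, ?_⟩
    · rw [hy.1 i (by have := hn hi; omega)]
      exact mem_of_mem_nhds (hf i)
    · show y.2 ∈ t
      rw [hy.2]
      exact mem_of_mem_nhds ht
  choose! nn hnn using key
  -- the cylinder neighborhoods are open
  have hop : ∀ (x : Cantor × Z) (n : ℕ),
      IsOpen {y : Cantor × Z | (∀ i < n, y.1 i = x.1 i) ∧ y.2 = x.2} := by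
    intro x n
    have : {y : Cantor × Z | (∀ i < n, y.1 i = x.1 i) ∧ y.2 = x.2} =
        (⋂ i : Fin n, (fun y : Cantor × Z => y.1 (i : ℕ)) ⁻¹' {x.1 (i : ℕ)}) ∩
          (Prod.snd ⁻¹' {x.2}) := by
      ext y
      simp only [Set.mem_inter_iff, Set.mem_iInter, Set.mem_preimage, Set.mem_singleton_iff,
        Set.mem_setOf_eq]
      exact ⟨fun h => ⟨fun i => h.1 i i.2, h.2⟩, fun h => ⟨fun i hi => h.1 ⟨i, hi⟩, h.2⟩⟩
    rw [this]
    exact IsOpen.inter (isOpen_iInter_of_finite fun i =>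
        (isOpen_discrete _).preimage ((continuous_apply (i : ℕ)).comp continuous_fst))
      ((isOpen_discrete _).preimage continuous_snd)
  have hcp : IsCompact P := hP.1.isCompact
  obtain ⟨T, hTP, hT⟩ := hcp.elim_nhds_subcover
    (fun x => {y : Cantor × Z | (∀ i < nn x, y.1 i = x.1 i) ∧ y.2 = x.2})
    (fun x hx => (hop x (nn x)).mem_nhds ⟨fun i _ => rfl, rfl⟩)
  refine ⟨T.sup nn, fun p p' hagree h2 hp => ?_⟩
  obtain ⟨x, hxT, hpx⟩ := Set.mem_iUnion₂.1 (hT hp)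
  have hle : nn x ≤ T.sup nn := Finset.le_sup hxT
  refine hnn x (hTP x hxT) ⟨fun i hi => ?_, ?_⟩
  · rw [← hagree i (by omega)]
    exact hpx.1 i hi
  · rw [← h2]; exact hpx.2

/-- the canonical level-n cylinder family of a set -/
def famAt (P : Set (Cantor × Z)) (n : ℕ) : Finset (List Bool × Z) :=
  (levelPart Z n).filter (fun q => emb q (fun _ => false) ∈ P)

theorem cylFam_famAt {P : Set (Cantor × Z)} {n₀ : ℕ}
    (h : ∀ p p' : Cantor × Z, (∀ i < n₀, p.1 i = p'.1 i) → p.2 = p'.2 → p ∈ P → p' ∈ P)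
    {n : ℕ} (hn : n₀ ≤ n) : CylFam (famAt P n) P := by
  have hsub : ∀ q ∈ levelPart Z n, ∀ p ∈ cyl q, ∀ p' ∈ cyl q, p ∈ P → p' ∈ P := by
    intro q hq p hp p' hp' hpP
    rw [mem_levelPart] at hq
    rw [mem_cyl_iff] at hp hp'
    refine h p p' (fun i hi => ?_) (hp.1.trans hp'.1.symm) hpP
    rw [hp.2 i (by omega), hp'.2 i (by omega)]
  constructor
  · intro q hq p hp
    rw [famAt, Finset.mem_filter] at hq
    exact hsub q hq.1 _ (emb_mem_cyl q _) p hp hq.2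
  · intro p hp
    obtain ⟨q, ⟨hq, hpq⟩, hu⟩ := (cylFam_levelPart n).2 p (Set.mem_univ p)
    refine ⟨q, ⟨?_, hpq⟩, ?_⟩
    · rw [famAt, Finset.mem_filter]
      exact ⟨hq, hsub q hq p hpq _ (emb_mem_cyl q _) hp⟩
    · rintro r ⟨hr, hpr⟩
      rw [famAt, Finset.mem_filter] at hr
      exact hu r ⟨hr.1, hpr⟩

/-- a clopen set has a cylinder family at every sufficiently deep level -/
theorem exists_cylFam {P : Set (Cantor × Z)} (hP : IsClopen P) :
    ∃ n₀ : ℕ, ∀ n, n₀ ≤ n → CylFam (famAt P n) P := by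
  obtain ⟨n₀, h⟩ := exists_level_of_isClopen hP
  exact ⟨n₀, fun n hn => cylFam_famAt h hn⟩

end RSU
namespace RSU

variable {Z : Type*}

theorem cyl_split (q : List Bool × Z) :
    cyl q = cyl (q.1 ++ [false], q.2) ∪ cyl (q.1 ++ [true], q.2) := by
  ext p
  constructor
  · intro hp
    rw [mem_cyl_iff] at hp
    have : p ∈ cyl (q.1 ++ [p.1 q.1.length], q.2) := by
      rw [mem_cyl_iff]
      refine ⟨hp.1, fun i hi => ?_⟩
      simp only [List.length_append, List.length_cons, List.length_nil] at hi
      by_cases h : i < q.1.length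
      · rw [List.getElem_append_left h]; exact hp.2 i h
      · have : i = q.1.length := by omega
        subst this
        rw [List.getElem_append_right (by omega)]
        simp
    cases hb : p.1 q.1.length
    · left; rwa [hb] at this
    · right; rwa [hb] at this
  · rintro (hp | hp) <;> exact mem_cyl_of_mem_cyl_append hp

theorem mem_cyl_append_getElem {q : List Bool × Z} {b : Bool} {p : Cantor × Z}
    (h : p ∈ cyl (q.1 ++ [b], q.2)) : p.1 q.1.length = b := by
  rw [mem_cyl_iff] at h
  have := h.2 q.1.length (by simp)
  rw [List.getElem_append_right (by omega)] at this
  simpa using this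

/-- a cylinder family of a nonempty set can be refined to any larger cardinality -/
theorem cylFam_subdiv {F : Finset (List Bool × Z)} {P : Set (Cantor × Z)}
    (hF : CylFam F P) (hP : P.Nonempty) :
    ∀ m, F.card ≤ m → ∃ F' : Finset (List Bool × Z), CylFam F' P ∧ F'.card = m := by
  intro m hm
  induction m with
  | zero => exact ⟨F, hF, le_antisymm hm (Nat.zero_le _)⟩
  | succ k ih =>
    rcases Nat.lt_or_ge k F.card with hk | hk
    · have : F.card = k + 1 := by omega
      exact ⟨F, hF, this⟩
    · obtain ⟨G, hG, hGcard⟩ := ih hk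
      obtain ⟨q, hq⟩ := cylFam_nonempty hG hP
      set q0 : List Bool × Z := (q.1 ++ [false], q.2) with hq0
      set q1 : List Bool × Z := (q.1 ++ [true], q.2) with hq1
      -- neither child belongs to G (nor to each other)
      have hchild : ∀ b : Bool, ((q.1 ++ [b], q.2) : List Bool × Z) ∉ G := by
        intro b hbG
        obtain ⟨p, hp⟩ := cyl_nonempty ((q.1 ++ [b], q.2) : List Bool × Z)
        have hpq : p ∈ cyl q := mem_cyl_of_mem_cyl_append hp
        have hpP : p ∈ P := hG.1 q hq hpq
        obtain ⟨r, -, hu⟩ := hG.2 p hpP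
        have h1 := hu _ ⟨hbG, hp⟩
        have h2 := hu _ ⟨hq, hpq⟩
        have h3 : ((q.1 ++ [b], q.2) : List Bool × Z) = q := h1.trans h2.symm
        have h4 := congrArg (fun r : List Bool × Z => r.1.length) h3
        simp at h4
      have hne01 : q0 ≠ q1 := by
        intro h
        have : ([false] : List Bool) = [true] := by
          have := congrArg Prod.fst h
          simpa [hq0, hq1] using this
        simp at this
      have hk1 : 1 ≤ k := hGcard ▸ Finset.card_pos.2 ⟨q, hq⟩
      refine ⟨insert q0 (insert q1 (G.erase q)), ?_, ?_⟩
      swap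
      · rw [Finset.card_insert_of_notMem, Finset.card_insert_of_notMem,
          Finset.card_erase_of_mem hq, hGcard]
        · omega
        · intro h; exact hchild true (Finset.mem_of_mem_erase h)
        · simp only [Finset.mem_insert]
          rintro (h | h)
          · exact hne01 h
          · exact hchild false (Finset.mem_of_mem_erase h)
      constructor
      · intro r hr p hp
        simp only [Finset.mem_insert] at hr
        rcases hr with rfl | rfl | hr
        · exact hG.1 q hq (mem_cyl_of_mem_cyl_append hp)
        · exact hG.1 q hq (mem_cyl_of_mem_cyl_append hp)
        · exact hG.1 r (Finset.mem_of_mem_erase hr) hp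
      · intro p hp
        obtain ⟨r, ⟨hrG, hpr⟩, hu⟩ := hG.2 p hp
        by_cases hrq : r = q
        · subst hrq
          have hsplit : p ∈ cyl q0 ∪ cyl q1 := (cyl_split r) ▸ hpr
          have herase : ∀ s ∈ G.erase r, p ∈ cyl s → False := by
            intro s hs hps
            exact absurd (hu s ⟨Finset.mem_of_mem_erase hs, hps⟩) (Finset.ne_of_mem_erase hs)
          rcases hsplit with hp0 | hp1
          · refine ⟨q0, ⟨Finset.mem_insert_self _ _, hp0⟩, ?_⟩
            rintro s ⟨hs, hps⟩
            simp only [Finset.mem_insert] at hs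
            rcases hs with rfl | rfl | hs
            · rfl
            · have h1 := mem_cyl_append_getElem hp0
              have h2 := mem_cyl_append_getElem hps
              rw [h1] at h2; exact absurd h2 (by simp)
            · exact absurd (herase s hs hps) (by simp)
          · refine ⟨q1, ⟨by simp, hp1⟩, ?_⟩
            rintro s ⟨hs, hps⟩
            simp only [Finset.mem_insert] at hs
            rcases hs with rfl | rfl | hs
            · have h1 := mem_cyl_append_getElem hp1
              have h2 := mem_cyl_append_getElem hps
              rw [h1] at h2; exact absurd h2 (by simp)
            · rfl
            · exact absurd (herase s hs hps) (by simp)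
        · refine ⟨r, ⟨by simp [Finset.mem_insert, Finset.mem_erase, hrq, hrG], hpr⟩, ?_⟩
          rintro s ⟨hs, hps⟩
          simp only [Finset.mem_insert] at hs
          rcases hs with rfl | rfl | hs
          · exact absurd (hu q ⟨hq, mem_cyl_of_mem_cyl_append hps⟩).symm hrq
          · exact absurd (hu q ⟨hq, mem_cyl_of_mem_cyl_append hps⟩).symm hrq
          · exact hu s ⟨Finset.mem_of_mem_erase hs, hps⟩

end RSU
namespace RSU

variable {Z : Type*}

/-- the unique element of a dyadic partition whose cylinder contains `p` -/
def pick {A : Finset (List Bool × Z)} (hA : IsDyadicPartitionZ Z A) (p : Cantor × Z) :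
    List Bool × Z :=
  (hA p).exists.choose

theorem pick_spec {A : Finset (List Bool × Z)} (hA : IsDyadicPartitionZ Z A) (p : Cantor × Z) :
    pick hA p ∈ A ∧ p ∈ cyl (pick hA p) :=
  (hA p).exists.choose_spec

theorem pick_eq_of_mem {A : Finset (List Bool × Z)} (hA : IsDyadicPartitionZ Z A)
    {p : Cantor × Z} {q : List Bool × Z} (hq : q ∈ A) (hpq : p ∈ cyl q) : pick hA p = q := by
  obtain ⟨r, -, hu⟩ := hA p
  rw [hu _ (pick_spec hA p), hu q ⟨hq, hpq⟩]

theorem pick_emb {A : Finset (List Bool × Z)} (hA : IsDyadicPartitionZ Z A)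
    {q : List Bool × Z} (hq : q ∈ A) (ξ : Cantor) : pick hA (emb q ξ) = q :=
  pick_eq_of_mem hA hq (emb_mem_cyl q ξ)

/-- the underlying map of a table homeomorphism -/
def tmap {A : Finset (List Bool × Z)} (f : List Bool × Z → List Bool × Z)
    (hA : IsDyadicPartitionZ Z A) (p : Cantor × Z) : Cantor × Z :=
  emb (f (pick hA p)) (tailOf (pick hA p).1 p.1)

theorem tmap_emb {A : Finset (List Bool × Z)} (f : List Bool × Z → List Bool × Z)
    (hA : IsDyadicPartitionZ Z A) {q : List Bool × Z} (hq : q ∈ A) (ξ : Cantor) :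
    tmap f hA (emb q ξ) = emb (f q) ξ := by
  rw [tmap, pick_emb hA hq]
  congr 1
  exact tailOf_wordAppend q.1 ξ

theorem emb_tailOf_of_mem_cyl {q : List Bool × Z} {p : Cantor × Z} (h : p ∈ cyl q) :
    emb q (tailOf q.1 p.1) = p := by
  obtain ⟨ξ, rfl⟩ := mem_cyl_iff_emb.1 h
  show emb q (tailOf q.1 (wordAppend q.1 ξ)) = emb q ξ
  rw [tailOf_wordAppend]

theorem emb_pick_tailOf {A : Finset (List Bool × Z)} (hA : IsDyadicPartitionZ Z A)
    (p : Cantor × Z) : emb (pick hA p) (tailOf (pick hA p).1 p.1) = p :=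
  emb_tailOf_of_mem_cyl (pick_spec hA p).2

variable [Nonempty Z] [TopologicalSpace Z] [DiscreteTopology Z]

theorem continuous_tmap {A : Finset (List Bool × Z)} (f : List Bool × Z → List Bool × Z)
    (hA : IsDyadicPartitionZ Z A) : Continuous (tmap f hA) := by
  rw [continuous_iff_continuousAt]
  intro p
  set q := pick hA p with hq
  have hqA : q ∈ A := (pick_spec hA p).1
  have hbranch : Continuous (fun p' : Cantor × Z => emb (f q) (tailOf q.1 p'.1)) := by
    refine Continuous.prodMk ?_ continuous_const
    refine continuous_pi fun n => ?_
    by_cases hn : n < (f q).1.length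
    · have : (fun p' : Cantor × Z => wordAppend (f q).1 (tailOf q.1 p'.1) n) =
          fun _ => (f q).1[n] := by
        funext p'; exact wordAppend_lt _ _ hn
      rw [this]; exact continuous_const
    · have : (fun p' : Cantor × Z => wordAppend (f q).1 (tailOf q.1 p'.1) n) =
          fun p' => p'.1 (n - (f q).1.length + q.1.length) := by
        funext p'; exact wordAppend_ge _ _ hn
      rw [this]
      exact (continuous_apply _).comp continuous_fst
  refine ContinuousAt.congr hbranch.continuousAt ?_
  have hmem : cyl q ∈ nhds p := (isOpen_cyl q).mem_nhds (pick_spec hA p).2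
  filter_upwards [hmem] with p' hp'
  rw [tmap, pick_eq_of_mem hA hqA hp']

variable [Fintype Z]

/-- the homeomorphism defined by a table -/
def tableHomeo {A B : Finset (List Bool × Z)} {f : List Bool × Z → List Bool × Z}
    (hA : IsDyadicPartitionZ Z A) (hB : IsDyadicPartitionZ Z B)
    (hf : Set.BijOn f A B) : (Cantor × Z) ≃ₜ (Cantor × Z) where
  toFun := tmap f hA
  invFun := tmap (Function.invFunOn f A) hB
  left_inv := by
    intro p
    set q := pick hA p with hqdef
    have hqA : q ∈ A := (pick_spec hA p).1
    have h1 : p = emb q (tailOf q.1 p.1) := (emb_pick_tailOf hA p).symm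
    conv_lhs => rw [h1]
    rw [tmap_emb f hA hqA, tmap_emb _ hB (hf.mapsTo hqA),
      hf.injOn.leftInvOn_invFunOn hqA]
    exact (emb_pick_tailOf hA p).symm ▸ h1.symm
  right_inv := by
    intro p
    set q := pick hB p with hqdef
    have hqB : q ∈ B := (pick_spec hB p).1
    have h1 : p = emb q (tailOf q.1 p.1) := (emb_pick_tailOf hB p).symm
    conv_lhs => rw [h1]
    rw [tmap_emb _ hB hqB, tmap_emb f hA (hf.surjOn.mapsTo_invFunOn hqB),
      hf.surjOn.rightInvOn_invFunOn hqB]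
    exact h1.symm
  continuous_toFun := continuous_tmap f hA
  continuous_invFun := continuous_tmap _ hB

theorem tableHomeo_emb {A B : Finset (List Bool × Z)} {f : List Bool × Z → List Bool × Z}
    (hA : IsDyadicPartitionZ Z A) (hB : IsDyadicPartitionZ Z B) (hf : Set.BijOn f A B)
    {q : List Bool × Z} (hq : q ∈ A) (ξ : Cantor) :
    tableHomeo hA hB hf (emb q ξ) = emb (f q) ξ :=
  tmap_emb f hA hq ξ

theorem bijOn_card {A B : Finset (List Bool × Z)} {f : List Bool × Z → List Bool × Z}
    (hf : Set.BijOn f A B) : A.card = B.card := by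
  refine Finset.card_bij (fun a _ => f a) (fun a ha => hf.mapsTo ha) ?_ ?_
  · intro a ha b hb h
    exact hf.injOn ha hb h
  · intro b hb
    obtain ⟨a, ha, rfl⟩ := hf.surjOn hb
    exact ⟨a, ha, rfl⟩

theorem tableHomeo_mem_V {A B : Finset (List Bool × Z)} {f : List Bool × Z → List Bool × Z}
    (hA : IsDyadicPartitionZ Z A) (hB : IsDyadicPartitionZ Z B) (hf : Set.BijOn f A B) :
    tableHomeo hA hB hf ∈ HigmanThompsonV Z := by
  refine Subgroup.subset_closure ⟨A, B, f, hA, hB, bijOn_card hf, hf, ?_⟩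
  intro q hq ξ
  exact tableHomeo_emb hA hB hf hq ξ

theorem tableHomeo_image_cyl {A B : Finset (List Bool × Z)} {f : List Bool × Z → List Bool × Z}
    (hA : IsDyadicPartitionZ Z A) (hB : IsDyadicPartitionZ Z B) (hf : Set.BijOn f A B)
    {q : List Bool × Z} (hq : q ∈ A) :
    tableHomeo hA hB hf '' cyl q = cyl (f q) := by
  ext p
  constructor
  · rintro ⟨x, hx, rfl⟩
    obtain ⟨ξ, rfl⟩ := mem_cyl_iff_emb.1 hx
    rw [tableHomeo_emb hA hB hf hq]
    exact emb_mem_cyl _ _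
  · intro hp
    obtain ⟨ξ, rfl⟩ := mem_cyl_iff_emb.1 hp
    exact ⟨emb q ξ, emb_mem_cyl _ _, tableHomeo_emb hA hB hf hq ξ⟩

theorem tableHomeo_fix {A B : Finset (List Bool × Z)} {f : List Bool × Z → List Bool × Z}
    (hA : IsDyadicPartitionZ Z A) (hB : IsDyadicPartitionZ Z B) (hf : Set.BijOn f A B)
    {q : List Bool × Z} (hq : q ∈ A) (hfq : f q = q) {p : Cantor × Z} (hp : p ∈ cyl q) :
    tableHomeo hA hB hf p = p := by
  obtain ⟨ξ, rfl⟩ := mem_cyl_iff_emb.1 hp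
  rw [tableHomeo_emb hA hB hf hq, hfq]

end RSU
namespace RSU

variable {Z : Type*}

/-- the defining property of generators of `V_Z` -/
def IsTable [TopologicalSpace Z] (γ : (Cantor × Z) ≃ₜ (Cantor × Z)) : Prop :=
  ∃ (A B : Finset (List Bool × Z)) (f : List Bool × Z → List Bool × Z),
    IsDyadicPartitionZ Z A ∧ IsDyadicPartitionZ Z B ∧ A.card = B.card ∧
    Set.BijOn f A B ∧
    ∀ q ∈ A, ∀ ξ : Cantor, γ (wordAppend q.1 ξ, q.2) = (wordAppend (f q).1 ξ, (f q).2)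

variable [TopologicalSpace Z] [Nonempty Z] [Fintype Z]

theorem higmanThompsonV_eq_closure :
    HigmanThompsonV Z = Subgroup.closure {γ | IsTable γ} := rfl

/-- the maximal word length of a finite set of labelled words -/
def maxLen (A : Finset (List Bool × Z)) : ℕ := A.sup (fun q => q.1.length)

theorem le_maxLen {A : Finset (List Bool × Z)} {q : List Bool × Z} (h : q ∈ A) :
    q.1.length ≤ maxLen A := Finset.le_sup (f := fun q => q.1.length) h

/-- transport of a cylinder label along a table -/
def push {A : Finset (List Bool × Z)} (hA : IsDyadicPartitionZ Z A)
    (f : List Bool × Z → List Bool × Z) (c : List Bool × Z) : List Bool × Z :=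
  ((f (pick hA (emb c (fun _ => false)))).1 ++
    c.1.drop (pick hA (emb c (fun _ => false))).1.length,
    (f (pick hA (emb c (fun _ => false)))).2)

theorem push_spec {A : Finset (List Bool × Z)} (hA : IsDyadicPartitionZ Z A)
    {f : List Bool × Z → List Bool × Z} {γ : (Cantor × Z) ≃ₜ (Cantor × Z)}
    (heval : ∀ q ∈ A, ∀ ξ : Cantor, γ (emb q ξ) = emb (f q) ξ)
    {c : List Bool × Z} (hlen : maxLen A ≤ c.1.length) (ξ : Cantor) :
    γ (emb c ξ) = emb (push hA f c) ξ := by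
  set a := pick hA (emb c (fun _ => false)) with ha
  have haA : a ∈ A := (pick_spec hA _).1
  have hbase : emb c (fun _ => false) ∈ cyl a := (pick_spec hA _).2
  obtain ⟨h2, h1⟩ := prefix_of_mem_cyl hbase (emb_mem_cyl c _)
    ((le_maxLen haA).trans hlen)
  obtain ⟨u, hu⟩ := h1
  have hc : c = (a.1 ++ u, a.2) := Prod.ext hu.symm h2.symm
  have hdrop : c.1.drop a.1.length = u := by
    rw [hc]; exact List.drop_left
  rw [push, ← ha, hdrop]
  conv_lhs => rw [hc]
  rw [show ((a.1 ++ u, a.2) : List Bool × Z) = (a.1 ++ u, (a : List Bool × Z).2) from rfl]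
  rw [emb_append a u ξ, heval a haA]
  rw [show ((f a).1 ++ u, (f a).2) = ((f a).1 ++ u, ((f a) : List Bool × Z).2) from rfl]
  rw [emb_append (f a) u ξ]

theorem cyl_push {A : Finset (List Bool × Z)} (hA : IsDyadicPartitionZ Z A)
    {f : List Bool × Z → List Bool × Z} {γ : (Cantor × Z) ≃ₜ (Cantor × Z)}
    (heval : ∀ q ∈ A, ∀ ξ : Cantor, γ (emb q ξ) = emb (f q) ξ)
    {c : List Bool × Z} (hlen : maxLen A ≤ c.1.length) :
    cyl (push hA f c) = γ '' cyl c := by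
  ext p
  rw [mem_cyl_iff_emb]
  constructor
  · rintro ⟨ξ, rfl⟩
    exact ⟨emb c ξ, emb_mem_cyl c ξ, push_spec hA heval hlen ξ⟩
  · rintro ⟨x, hx, rfl⟩
    obtain ⟨ξ, rfl⟩ := mem_cyl_iff_emb.1 hx
    exact ⟨ξ, (push_spec hA heval hlen ξ).symm⟩

/-- transport of a cylinder family along a homeomorphism -/
theorem mapFam {e : List Bool × Z → List Bool × Z} {C : Finset (List Bool × Z)}
    {P : Set (Cantor × Z)} {γ : (Cantor × Z) ≃ₜ (Cantor × Z)} (hC : CylFam C P)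
    (hcyl : ∀ c ∈ C, cyl (e c) = γ '' cyl c) :
    Set.InjOn e C ∧ CylFam (C.image e) (γ '' P) := by
  have hinj : Set.InjOn e C := by
    intro c hc c' hc' h
    obtain ⟨p, hp⟩ := cyl_nonempty c
    have h1 : γ p ∈ cyl (e c) := (hcyl c hc).symm ▸ Set.mem_image_of_mem γ hp
    rw [h, hcyl c' hc'] at h1
    have h2 : p ∈ cyl c' := γ.injective.mem_set_image.1 h1
    obtain ⟨r, -, hu⟩ := hC.2 p (hC.1 c hc hp)
    exact (hu c ⟨hc, hp⟩).trans (hu c' ⟨hc', h2⟩).symm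
  refine ⟨hinj, ?_, ?_⟩
  · intro q hq p hp
    obtain ⟨c, hc, rfl⟩ := Finset.mem_image.1 hq
    rw [hcyl c hc] at hp
    obtain ⟨x, hx, rfl⟩ := hp
    exact Set.mem_image_of_mem γ (hC.1 c hc hx)
  · rintro p ⟨x, hx, rfl⟩
    obtain ⟨c, ⟨hc, hxc⟩, hu⟩ := hC.2 x hx
    refine ⟨e c, ⟨Finset.mem_image_of_mem e hc, ?_⟩, ?_⟩
    · rw [hcyl c hc]; exact Set.mem_image_of_mem γ hxc
    · rintro r ⟨hr, hpr⟩
      obtain ⟨c', hc', rfl⟩ := Finset.mem_image.1 hr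
      rw [hcyl c' hc'] at hpr
      have : x ∈ cyl c' := γ.injective.mem_set_image.1 hpr
      rw [hu c' ⟨hc', this⟩]

theorem isTable_one : IsTable (1 : (Cantor × Z) ≃ₜ (Cantor × Z)) := by
  classical
  refine ⟨levelPart Z 0, levelPart Z 0, id, isDyadic_levelPart 0, isDyadic_levelPart 0, rfl,
    Set.bijOn_id _, ?_⟩
  intro q _ ξ
  rfl

theorem symm_table {A B : Finset (List Bool × Z)} {f : List Bool × Z → List Bool × Z}
    {γ : (Cantor × Z) ≃ₜ (Cantor × Z)} (hf : Set.BijOn f A B)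
    (heval : ∀ q ∈ A, ∀ ξ : Cantor, γ (emb q ξ) = emb (f q) ξ) :
    Set.BijOn (Function.invFunOn f A) B A ∧
      ∀ q ∈ B, ∀ ξ : Cantor, γ.symm (emb q ξ) = emb (Function.invFunOn f A q) ξ := by
  have hbij : Set.BijOn (Function.invFunOn f A) B A :=
    Set.BijOn.symm hf.invOn_invFunOn.symm hf
  refine ⟨hbij, fun q hq ξ => ?_⟩
  refine γ.injective ?_
  rw [Homeomorph.apply_symm_apply, heval _ (hf.surjOn.mapsTo_invFunOn hq),
    hf.surjOn.rightInvOn_invFunOn hq]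

theorem isTable_inv {γ : (Cantor × Z) ≃ₜ (Cantor × Z)} (h : IsTable γ) : IsTable γ⁻¹ := by
  obtain ⟨A, B, f, hA, hB, hcard, hf, heval⟩ := h
  obtain ⟨hbij, heval'⟩ := symm_table hf heval
  exact ⟨B, A, Function.invFunOn f A, hB, hA, hcard.symm, hbij, heval'⟩

theorem isTable_mul {g h : (Cantor × Z) ≃ₜ (Cantor × Z)}
    (hg : IsTable g) (hh : IsTable h) : IsTable (g * h) := by
  classical
  obtain ⟨A₁, B₁, f₁, hA₁, hB₁, -, hf₁, he₁⟩ := hh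
  obtain ⟨A₂, B₂, f₂, hA₂, hB₂, -, hf₂, he₂⟩ := hg
  obtain ⟨hf₁', he₁'⟩ := symm_table hf₁ he₁
  set n := max (maxLen B₁) (maxLen A₂) with hn
  set C := levelPart Z n with hC
  have hCfam : CylFam C (Set.univ : Set (Cantor × Z)) := cylFam_levelPart n
  have hlen : ∀ c ∈ C, c.1.length = n := fun c hc => mem_levelPart.1 hc
  set back := push hB₁ (Function.invFunOn f₁ A₁) with hback
  set fwd := push hA₂ f₂ with hfwd
  have hbackcyl : ∀ c ∈ C, cyl (back c) = h.symm '' cyl c := fun c hc =>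
    cyl_push hB₁ he₁' (by rw [hlen c hc]; exact le_max_left _ _)
  have hfwdcyl : ∀ c ∈ C, cyl (fwd c) = g '' cyl c := fun c hc =>
    cyl_push hA₂ he₂ (by rw [hlen c hc]; exact le_max_right _ _)
  obtain ⟨hbackinj, hbackfam⟩ := mapFam hCfam hbackcyl
  obtain ⟨hfwdinj, hfwdfam⟩ := mapFam hCfam hfwdcyl
  rw [Set.image_univ, Homeomorph.range_coe] at hbackfam hfwdfam
  have hbackbij : Set.BijOn back C (C.image back) := by
    rw [Finset.coe_image]
    exact ⟨Set.mapsTo_image _ _, hbackinj, Set.surjOn_image _ _⟩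
  have hfwdbij : Set.BijOn fwd C (C.image fwd) := by
    rw [Finset.coe_image]
    exact ⟨Set.mapsTo_image _ _, hfwdinj, Set.surjOn_image _ _⟩
  have hinvbij : Set.BijOn (Function.invFunOn back C) (C.image back) C :=
    Set.BijOn.symm hbackbij.invOn_invFunOn.symm hbackbij
  refine ⟨C.image back, C.image fwd, fwd ∘ Function.invFunOn back C,
    isDyadic_of_cylFam_univ hbackfam, isDyadic_of_cylFam_univ hfwdfam, ?_,
    hfwdbij.comp hinvbij, ?_⟩
  · rw [Finset.card_image_of_injOn hbackinj, Finset.card_image_of_injOn hfwdinj]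
  · intro q hq ξ
    obtain ⟨c, hc, rfl⟩ := Finset.mem_image.1 hq
    have hcc : Function.invFunOn back (↑C) (back c) = c :=
      hbackinj.leftInvOn_invFunOn hc
    have h1 : h.symm (emb c ξ) = emb (back c) ξ :=
      push_spec hB₁ he₁' (by rw [hlen c hc]; exact le_max_left _ _) ξ
    have h2 : h (emb (back c) ξ) = emb c ξ := by
      rw [← h1, Homeomorph.apply_symm_apply]
    show (g * h) (emb (back c) ξ) = emb ((fwd ∘ Function.invFunOn back ↑C) (back c)) ξ
    have : (g * h) (emb (back c) ξ) = g (h (emb (back c) ξ)) := rfl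
    rw [this, h2, Function.comp_apply, hcc]
    exact push_spec hA₂ he₂ (by rw [hlen c hc]; exact le_max_right _ _) ξ

/-- the set of tables is a subgroup -/
def tableSubgroup (Z : Type*) [TopologicalSpace Z] [Nonempty Z] [Fintype Z] :
    Subgroup ((Cantor × Z) ≃ₜ (Cantor × Z)) where
  carrier := {γ | IsTable γ}
  one_mem' := isTable_one
  mul_mem' := fun ha hb => isTable_mul ha hb
  inv_mem' := fun ha => isTable_inv ha

theorem mem_V_iff {γ : (Cantor × Z) ≃ₜ (Cantor × Z)} :
    γ ∈ HigmanThompsonV Z ↔ IsTable γ := by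
  constructor
  · intro h
    exact (Subgroup.closure_le (tableSubgroup Z)).2 (le_refl _) h
  · intro h
    exact Subgroup.subset_closure h

end RSU
namespace RSU

variable {Z : Type*}

theorem bijOn_matchFinsets {s t : Finset (List Bool × Z)} (h : s.card = t.card) :
    ∃ e : (List Bool × Z) → (List Bool × Z), Set.BijOn e s t := by
  classical
  set E := Finset.equivOfCardEq h with hE
  refine ⟨fun q => if hq : q ∈ s then (E ⟨q, hq⟩ : List Bool × Z) else q, ?_, ?_, ?_⟩
  · intro q hq
    replace hq : q ∈ s := hq
    dsimp only
    rw [dif_pos hq]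
    exact (E ⟨q, hq⟩).2
  · intro q hq q' hq' hee
    replace hq : q ∈ s := hq
    replace hq' : q' ∈ s := hq'
    dsimp only at hee
    rw [dif_pos hq, dif_pos hq'] at hee
    have := E.injective (Subtype.ext hee)
    exact congrArg Subtype.val this
  · intro r hr
    replace hr : r ∈ t := hr
    refine ⟨(E.symm ⟨r, hr⟩ : List Bool × Z), (E.symm ⟨r, hr⟩).2, ?_⟩
    dsimp only
    rw [dif_pos (E.symm ⟨r, hr⟩).2]
    have : (⟨(E.symm ⟨r, hr⟩ : List Bool × Z), (E.symm ⟨r, hr⟩).2⟩ : {x // x ∈ s}) =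
        E.symm ⟨r, hr⟩ := Subtype.ext rfl
    rw [this, Equiv.apply_symm_apply]

theorem bijOn_piecewise {s t s' t' : Finset (List Bool × Z)}
    {f g : (List Bool × Z) → (List Bool × Z)}
    (hss : Disjoint s s') (htt : Disjoint t t')
    (hf : Set.BijOn f s t) (hg : Set.BijOn g s' t') :
    Set.BijOn (fun q => if q ∈ s then f q else g q) ((s ∪ s' : Finset (List Bool × Z)) :
      Set (List Bool × Z)) ((t ∪ t' : Finset (List Bool × Z)) : Set (List Bool × Z)) := by
  classical
  have hmem : ∀ q : List Bool × Z, q ∈ (↑(s ∪ s') : Set (List Bool × Z)) ↔ q ∈ s ∨ q ∈ s' := by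
    intro q; simp
  refine ⟨?_, ?_, ?_⟩
  · intro q hq
    dsimp only
    rcases (hmem q).1 hq with h | h
    · rw [if_pos h]
      simp only [Finset.coe_union, Set.mem_union]
      exact Or.inl (hf.mapsTo h)
    · rw [if_neg (Finset.disjoint_right.1 hss h)]
      simp only [Finset.coe_union, Set.mem_union]
      exact Or.inr (hg.mapsTo h)
  · intro q hq q' hq' hee
    dsimp only at hee
    rcases (hmem q).1 hq with h | h <;> rcases (hmem q').1 hq' with h' | h'
    · rw [if_pos h, if_pos h'] at hee; exact hf.injOn h h' hee
    · rw [if_pos h, if_neg (Finset.disjoint_right.1 hss h')] at hee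
      exact absurd (hee ▸ hf.mapsTo h) (Finset.disjoint_right.1 htt (hg.mapsTo h'))
    · rw [if_neg (Finset.disjoint_right.1 hss h), if_pos h'] at hee
      exact absurd (hee ▸ hg.mapsTo h) (Finset.disjoint_left.1 htt (hf.mapsTo h'))
    · rw [if_neg (Finset.disjoint_right.1 hss h),
        if_neg (Finset.disjoint_right.1 hss h')] at hee
      exact hg.injOn h h' hee
  · intro r hr
    simp only [Finset.coe_union, Set.mem_union] at hr
    rcases hr with h | h
    · obtain ⟨q, hq, rfl⟩ := hf.surjOn h
      replace hq : q ∈ s := hq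
      refine ⟨q, by simp [hq], ?_⟩
      dsimp only
      rw [if_pos hq]
    · obtain ⟨q, hq, rfl⟩ := hg.surjOn h
      replace hq : q ∈ s' := hq
      refine ⟨q, by simp [hq], ?_⟩
      dsimp only
      rw [if_neg (Finset.disjoint_right.1 hss hq)]

theorem cylFam_eq_iUnion {F : Finset (List Bool × Z)} {P : Set (Cantor × Z)}
    (hF : CylFam F P) : P = ⋃ q ∈ F, cyl q := by
  ext p
  constructor
  · intro hp
    obtain ⟨q, ⟨hq, hpq⟩, -⟩ := hF.2 p hp
    exact Set.mem_biUnion hq hpq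
  · intro hp
    obtain ⟨q, hq, hpq⟩ := Set.mem_iUnion₂.1 hp
    exact hF.1 q hq hpq

theorem mem_cyl_append_getElem' {q : List Bool × Z} {u : List Bool} {p : Cantor × Z}
    (h : p ∈ cyl (q.1 ++ u, q.2)) : ∀ j (hj : j < u.length), p.1 (q.1.length + j) = u[j] := by
  intro j hj
  rw [mem_cyl_iff] at h
  have := h.2 (q.1.length + j) (by simp; omega)
  rw [List.getElem_append_right (by omega)] at this
  rw [this]
  congr 1
  omega

theorem disjoint_cyl_append {q : List Bool × Z} {u v : List Bool} {j : ℕ}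
    (hju : j < u.length) (hjv : j < v.length) (hne : u[j] ≠ v[j]) :
    Disjoint (cyl ((q.1 ++ u, q.2) : List Bool × Z)) (cyl ((q.1 ++ v, q.2) : List Bool × Z)) := by
  rw [Set.disjoint_left]
  intro p hp hp'
  have h1 := mem_cyl_append_getElem' hp j hju
  have h2 := mem_cyl_append_getElem' hp' j hjv
  exact hne (h1 ▸ h2 ▸ rfl)

variable [Fintype Z] [Nonempty Z] [TopologicalSpace Z] [DiscreteTopology Z]

/-- three pairwise disjoint nonempty clopen subsets of a nonempty clopen set -/
theorem exists_three {W : Set (Cantor × Z)} (hW : IsClopen W) (hne : W.Nonempty) :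
    ∃ W₁ W₂ W₃ : Set (Cantor × Z),
      (IsClopen W₁ ∧ W₁.Nonempty ∧ W₁ ⊆ W) ∧ (IsClopen W₂ ∧ W₂.Nonempty ∧ W₂ ⊆ W) ∧
      (IsClopen W₃ ∧ W₃.Nonempty ∧ W₃ ⊆ W) ∧
      Disjoint W₁ W₂ ∧ Disjoint W₁ W₃ ∧ Disjoint W₂ W₃ := by
  obtain ⟨n₀, hfam⟩ := exists_cylFam hW
  have hF := hfam n₀ le_rfl
  obtain ⟨q, hq⟩ := cylFam_nonempty hF hne
  have hsub : ∀ u : List Bool, cyl ((q.1 ++ u, q.2) : List Bool × Z) ⊆ W := by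
    intro u p hp
    exact hF.1 q hq (mem_cyl_of_mem_cyl_append hp)
  refine ⟨cyl (q.1 ++ [false, false], q.2), cyl (q.1 ++ [false, true], q.2),
    cyl (q.1 ++ [true], q.2), ⟨isClopen_cyl _, cyl_nonempty _, hsub _⟩,
    ⟨isClopen_cyl _, cyl_nonempty _, hsub _⟩, ⟨isClopen_cyl _, cyl_nonempty _, hsub _⟩,
    ?_, ?_, ?_⟩
  · exact disjoint_cyl_append (j := 1) (by simp) (by simp) (by simp)
  · exact disjoint_cyl_append (j := 0) (by simp) (by simp) (by simp)
  · exact disjoint_cyl_append (j := 0) (by simp) (by simp) (by simp)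

/-- an element of `V_Z` supported in `U` carrying the clopen set `P` onto `Q` -/
theorem exists_transport {U P Q : Set (Cantor × Z)} (hU : IsClopen U) (hP : IsClopen P)
    (hQ : IsClopen Q) (hPU : P ⊆ U) (hQU : Q ⊆ U) (hPne : P.Nonempty) (hQne : Q.Nonempty)
    (hUP : (U \ P).Nonempty) (hUQ : (U \ Q).Nonempty) :
    ∃ g : (Cantor × Z) ≃ₜ (Cantor × Z), g ∈ HigmanThompsonV Z ∧ (∀ x ∉ U, g x = x) ∧
      g '' P = Q := by
  classical
  obtain ⟨nP, hfamP⟩ := exists_cylFam hP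
  obtain ⟨nQ, hfamQ⟩ := exists_cylFam hQ
  obtain ⟨nUP, hfamUP⟩ := exists_cylFam (hU.diff hP)
  obtain ⟨nUQ, hfamUQ⟩ := exists_cylFam (hU.diff hQ)
  obtain ⟨nc, hfamc⟩ := exists_cylFam hU.compl
  set m₁ := max (famAt P nP).card (famAt Q nQ).card with hm₁
  obtain ⟨FP, hFP, hFPcard⟩ := cylFam_subdiv (hfamP nP le_rfl) hPne m₁ (le_max_left _ _)
  obtain ⟨FQ, hFQ, hFQcard⟩ := cylFam_subdiv (hfamQ nQ le_rfl) hQne m₁ (le_max_right _ _)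
  set m₂ := max (famAt (U \ P) nUP).card (famAt (U \ Q) nUQ).card with hm₂
  obtain ⟨FUP, hFUP, hFUPcard⟩ :=
    cylFam_subdiv (hfamUP nUP le_rfl) hUP m₂ (le_max_left _ _)
  obtain ⟨FUQ, hFUQ, hFUQcard⟩ :=
    cylFam_subdiv (hfamUQ nUQ le_rfl) hUQ m₂ (le_max_right _ _)
  set Fc := famAt (Uᶜ : Set (Cantor × Z)) nc with hFc
  have hFcfam : CylFam Fc (Uᶜ : Set (Cantor × Z)) := hfamc nc le_rfl
  obtain ⟨e₁, he₁⟩ := bijOn_matchFinsets (hFPcard.trans hFQcard.symm)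
  obtain ⟨e₂, he₂⟩ := bijOn_matchFinsets (hFUPcard.trans hFUQcard.symm)
  -- set-level decompositions
  have hdisj1 : Disjoint P ((U \ P) ∪ Uᶜ) := by
    rw [Set.disjoint_union_right]
    constructor
    · exact Set.disjoint_left.2 fun x hx hx' => hx'.2 hx
    · exact Set.disjoint_left.2 fun x hx hx' => hx' (hPU hx)
  have hdisj2 : Disjoint (U \ P) (Uᶜ : Set (Cantor × Z)) :=
    Set.disjoint_left.2 fun x hx hx' => hx' hx.1
  have hcover1 : P ∪ ((U \ P) ∪ Uᶜ) = Set.univ := by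
    ext x
    simp only [Set.mem_union, Set.mem_diff, Set.mem_compl_iff, Set.mem_univ, iff_true]
    by_cases hx : x ∈ U
    · by_cases hxP : x ∈ P
      · exact Or.inl hxP
      · exact Or.inr (Or.inl ⟨hx, hxP⟩)
    · exact Or.inr (Or.inr hx)
  have hdisj1' : Disjoint Q ((U \ Q) ∪ Uᶜ) := by
    rw [Set.disjoint_union_right]
    constructor
    · exact Set.disjoint_left.2 fun x hx hx' => hx'.2 hx
    · exact Set.disjoint_left.2 fun x hx hx' => hx' (hQU hx)
  have hdisj2' : Disjoint (U \ Q) (Uᶜ : Set (Cantor × Z)) :=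
    Set.disjoint_left.2 fun x hx hx' => hx' hx.1
  have hcover1' : Q ∪ ((U \ Q) ∪ Uᶜ) = Set.univ := by
    ext x
    simp only [Set.mem_union, Set.mem_diff, Set.mem_compl_iff, Set.mem_univ, iff_true]
    by_cases hx : x ∈ U
    · by_cases hxQ : x ∈ Q
      · exact Or.inl hxQ
      · exact Or.inr (Or.inl ⟨hx, hxQ⟩)
    · exact Or.inr (Or.inr hx)
  have hAfam : CylFam (FP ∪ (FUP ∪ Fc)) (Set.univ : Set (Cantor × Z)) := by
    rw [← hcover1]
    exact cylFam_union hFP (cylFam_union hFUP hFcfam hdisj2) hdisj1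
  have hBfam : CylFam (FQ ∪ (FUQ ∪ Fc)) (Set.univ : Set (Cantor × Z)) := by
    rw [← hcover1']
    exact cylFam_union hFQ (cylFam_union hFUQ hFcfam hdisj2') hdisj1'
  have hA : IsDyadicPartitionZ Z (FP ∪ (FUP ∪ Fc)) := isDyadic_of_cylFam_univ hAfam
  have hB : IsDyadicPartitionZ Z (FQ ∪ (FUQ ∪ Fc)) := isDyadic_of_cylFam_univ hBfam
  -- finset-level disjointness
  have hdFPFUP : Disjoint FP FUP := cylFam_disjoint_finset hFP hFUP
    (Set.disjoint_left.2 fun x hx hx' => hx'.2 hx)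
  have hdFPFc : Disjoint FP Fc := cylFam_disjoint_finset hFP hFcfam
    (Set.disjoint_left.2 fun x hx hx' => hx' (hPU hx))
  have hdFUPFc : Disjoint FUP Fc := cylFam_disjoint_finset hFUP hFcfam hdisj2
  have hdFQFUQ : Disjoint FQ FUQ := cylFam_disjoint_finset hFQ hFUQ
    (Set.disjoint_left.2 fun x hx hx' => hx'.2 hx)
  have hdFQFc : Disjoint FQ Fc := cylFam_disjoint_finset hFQ hFcfam
    (Set.disjoint_left.2 fun x hx hx' => hx' (hQU hx))
  have hdFUQFc : Disjoint FUQ Fc := cylFam_disjoint_finset hFUQ hFcfam hdisj2'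
  set f : (List Bool × Z) → (List Bool × Z) :=
    fun q => if q ∈ FP then e₁ q else if q ∈ FUP then e₂ q else q with hfdef
  have hf : Set.BijOn f (FP ∪ (FUP ∪ Fc) : Finset (List Bool × Z))
      (FQ ∪ (FUQ ∪ Fc) : Finset (List Bool × Z)) := by
    refine bijOn_piecewise (Finset.disjoint_union_right.2 ⟨hdFPFUP, hdFPFc⟩)
      (Finset.disjoint_union_right.2 ⟨hdFQFUQ, hdFQFc⟩) he₁ ?_
    exact bijOn_piecewise hdFUPFc hdFUQFc he₂ (Set.bijOn_id _)
  refine ⟨tableHomeo hA hB hf, tableHomeo_mem_V hA hB hf, ?_, ?_⟩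
  · intro x hx
    obtain ⟨q, ⟨hqFc, hxq⟩, -⟩ := hFcfam.2 x hx
    refine tableHomeo_fix hA hB hf ?_ ?_ hxq
    · exact Finset.mem_union_right _ (Finset.mem_union_right _ hqFc)
    · rw [hfdef]
      dsimp only
      rw [if_neg (Finset.disjoint_right.1 hdFPFc hqFc),
        if_neg (Finset.disjoint_right.1 hdFUPFc hqFc)]
  · rw [cylFam_eq_iUnion hFP, Set.image_iUnion₂]
    rw [cylFam_eq_iUnion hFQ]
    ext p
    simp only [Set.mem_iUnion₂]
    constructor
    · rintro ⟨q, hq, hp⟩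
      have himg : tableHomeo hA hB hf '' cyl q = cyl (f q) :=
        tableHomeo_image_cyl hA hB hf (Finset.mem_union_left _ hq)
      rw [himg] at hp
      have hfq : f q = e₁ q := by
        rw [hfdef]; dsimp only; rw [if_pos (Finset.mem_coe.1 hq)]
      exact ⟨e₁ q, he₁.mapsTo hq, hfq ▸ hp⟩
    · rintro ⟨r, hr, hp⟩
      obtain ⟨q, hq, rfl⟩ := he₁.surjOn hr
      have himg : tableHomeo hA hB hf '' cyl q = cyl (f q) :=
        tableHomeo_image_cyl hA hB hf (Finset.mem_union_left _ hq)
      have hfq : f q = e₁ q := by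
        rw [hfdef]; dsimp only; rw [if_pos (Finset.mem_coe.1 hq)]
      exact ⟨q, hq, by rw [himg, hfq]; exact hp⟩

end RSU
namespace RSU

variable {Z : Type*} [Fintype Z] [Nonempty Z] [TopologicalSpace Z] [DiscreteTopology Z]

/-- an element of `V_Z` supported in `U` agreeing with `γ⁻¹` on `D` -/
theorem exists_full {γ : (Cantor × Z) ≃ₜ (Cantor × Z)} (hγ : IsTable γ)
    {U D : Set (Cantor × Z)} (hU : IsClopen U) (hD : IsClopen D) (hDU : D ⊆ U)
    (hDne : D.Nonempty) (hEU : γ.symm '' D ⊆ U) (hUD : (U \ D).Nonempty)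
    (hUE : (U \ γ.symm '' D).Nonempty) :
    ∃ b : (Cantor × Z) ≃ₜ (Cantor × Z), b ∈ HigmanThompsonV Z ∧ (∀ x ∉ U, b x = x) ∧
      ∀ x ∈ D, b x = γ.symm x := by
  classical
  obtain ⟨A, B, f, hA, hB, -, hf, heval⟩ := hγ
  obtain ⟨hf', heval'⟩ := symm_table hf heval
  set E := γ.symm '' D with hEdef
  have hE : IsClopen E := by
    have : E = γ ⁻¹' D := by
      ext x
      constructor
      · rintro ⟨y, hy, rfl⟩
        simpa [Homeomorph.apply_symm_apply] using hy
      · intro hx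
        exact ⟨γ x, hx, γ.symm_apply_apply x⟩
    rw [this]
    exact hD.preimage γ.continuous
  have hEne : E.Nonempty := hDne.image _
  -- the family for D, at a level deep enough for the table of γ.symm
  obtain ⟨nD, hfamD⟩ := exists_cylFam hD
  set n := max nD (maxLen B) with hn
  have hFD : CylFam (famAt D n) D := hfamD n (le_max_left _ _)
  set FD := famAt D n with hFDdef
  have hlenD : ∀ c ∈ FD, maxLen B ≤ c.1.length := by
    intro c hc
    have : c ∈ levelPart Z n := Finset.mem_filter.1 hc |>.1
    rw [mem_levelPart.1 this]
    exact le_max_right _ _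
  set back := push hB (Function.invFunOn f ↑A) with hbackdef
  have hbackcyl : ∀ c ∈ FD, cyl (back c) = γ.symm '' cyl c := fun c hc =>
    cyl_push hB heval' (hlenD c hc)
  obtain ⟨hbackinj, hbackfam⟩ := mapFam hFD hbackcyl
  -- families for the complements
  obtain ⟨nUD, hfamUD⟩ := exists_cylFam (hU.diff hD)
  obtain ⟨nUE, hfamUE⟩ := exists_cylFam (hU.diff hE)
  obtain ⟨nc, hfamc⟩ := exists_cylFam hU.compl
  set m := max (famAt (U \ D) nUD).card (famAt (U \ E) nUE).card with hm
  obtain ⟨F₂, hF₂, hF₂card⟩ := cylFam_subdiv (hfamUD nUD le_rfl) hUD m (le_max_left _ _)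
  obtain ⟨G₂, hG₂, hG₂card⟩ := cylFam_subdiv (hfamUE nUE le_rfl) hUE m (le_max_right _ _)
  set Fc := famAt (Uᶜ : Set (Cantor × Z)) nc with hFcdef
  have hFcfam : CylFam Fc (Uᶜ : Set (Cantor × Z)) := hfamc nc le_rfl
  obtain ⟨e₂, he₂⟩ := bijOn_matchFinsets (hF₂card.trans hG₂card.symm)
  -- assemble dyadic partitions
  have hdisj2 : Disjoint (U \ D) (Uᶜ : Set (Cantor × Z)) :=
    Set.disjoint_left.2 fun x hx hx' => hx' hx.1
  have hdisj1 : Disjoint D ((U \ D) ∪ Uᶜ) := by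
    rw [Set.disjoint_union_right]
    exact ⟨Set.disjoint_left.2 fun x hx hx' => hx'.2 hx,
      Set.disjoint_left.2 fun x hx hx' => hx' (hDU hx)⟩
  have hcover1 : D ∪ ((U \ D) ∪ Uᶜ) = Set.univ := by
    ext x
    simp only [Set.mem_union, Set.mem_diff, Set.mem_compl_iff, Set.mem_univ, iff_true]
    by_cases hx : x ∈ U
    · by_cases hxD : x ∈ D
      · exact Or.inl hxD
      · exact Or.inr (Or.inl ⟨hx, hxD⟩)
    · exact Or.inr (Or.inr hx)
  have hdisj2' : Disjoint (U \ E) (Uᶜ : Set (Cantor × Z)) :=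
    Set.disjoint_left.2 fun x hx hx' => hx' hx.1
  have hdisj1' : Disjoint E ((U \ E) ∪ Uᶜ) := by
    rw [Set.disjoint_union_right]
    exact ⟨Set.disjoint_left.2 fun x hx hx' => hx'.2 hx,
      Set.disjoint_left.2 fun x hx hx' => hx' (hEU hx)⟩
  have hcover1' : E ∪ ((U \ E) ∪ Uᶜ) = Set.univ := by
    ext x
    simp only [Set.mem_union, Set.mem_diff, Set.mem_compl_iff, Set.mem_univ, iff_true]
    by_cases hx : x ∈ U
    · by_cases hxE : x ∈ E
      · exact Or.inl hxE
      · exact Or.inr (Or.inl ⟨hx, hxE⟩)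
    · exact Or.inr (Or.inr hx)
  have hAfam : CylFam (FD ∪ (F₂ ∪ Fc)) (Set.univ : Set (Cantor × Z)) := by
    rw [← hcover1]
    exact cylFam_union hFD (cylFam_union hF₂ hFcfam hdisj2) hdisj1
  have hBfam : CylFam ((FD.image back) ∪ (G₂ ∪ Fc)) (Set.univ : Set (Cantor × Z)) := by
    rw [← hcover1']
    exact cylFam_union hbackfam (cylFam_union hG₂ hFcfam hdisj2') hdisj1'
  have hA' : IsDyadicPartitionZ Z (FD ∪ (F₂ ∪ Fc)) := isDyadic_of_cylFam_univ hAfam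
  have hB' : IsDyadicPartitionZ Z ((FD.image back) ∪ (G₂ ∪ Fc)) :=
    isDyadic_of_cylFam_univ hBfam
  have hdFDF₂ : Disjoint FD F₂ := cylFam_disjoint_finset hFD hF₂
    (Set.disjoint_left.2 fun x hx hx' => hx'.2 hx)
  have hdFDFc : Disjoint FD Fc := cylFam_disjoint_finset hFD hFcfam
    (Set.disjoint_left.2 fun x hx hx' => hx' (hDU hx))
  have hdF₂Fc : Disjoint F₂ Fc := cylFam_disjoint_finset hF₂ hFcfam hdisj2
  have hdBG₂ : Disjoint (FD.image back) G₂ := cylFam_disjoint_finset hbackfam hG₂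
    (Set.disjoint_left.2 fun x hx hx' => hx'.2 hx)
  have hdBFc : Disjoint (FD.image back) Fc := cylFam_disjoint_finset hbackfam hFcfam
    (Set.disjoint_left.2 fun x hx hx' => hx' (hEU hx))
  have hdG₂Fc : Disjoint G₂ Fc := cylFam_disjoint_finset hG₂ hFcfam hdisj2'
  have hbackbij : Set.BijOn back FD (FD.image back) := by
    rw [Finset.coe_image]
    exact ⟨Set.mapsTo_image _ _, hbackinj, Set.surjOn_image _ _⟩
  set fb : (List Bool × Z) → (List Bool × Z) :=
    fun q => if q ∈ FD then back q else if q ∈ F₂ then e₂ q else q with hfbdef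
  have hfb : Set.BijOn fb (FD ∪ (F₂ ∪ Fc) : Finset (List Bool × Z))
      ((FD.image back) ∪ (G₂ ∪ Fc) : Finset (List Bool × Z)) := by
    refine bijOn_piecewise (Finset.disjoint_union_right.2 ⟨hdFDF₂, hdFDFc⟩)
      (Finset.disjoint_union_right.2 ⟨hdBG₂, hdBFc⟩) hbackbij ?_
    exact bijOn_piecewise hdF₂Fc hdG₂Fc he₂ (Set.bijOn_id _)
  refine ⟨tableHomeo hA' hB' hfb, tableHomeo_mem_V hA' hB' hfb, ?_, ?_⟩
  · intro x hx
    obtain ⟨q, ⟨hqFc, hxq⟩, -⟩ := hFcfam.2 x hx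
    refine tableHomeo_fix hA' hB' hfb
      (Finset.mem_union_right _ (Finset.mem_union_right _ hqFc)) ?_ hxq
    rw [hfbdef]
    dsimp only
    rw [if_neg (Finset.disjoint_right.1 hdFDFc hqFc),
      if_neg (Finset.disjoint_right.1 hdF₂Fc hqFc)]
  · intro x hx
    obtain ⟨c, ⟨hcFD, hxc⟩, -⟩ := hFD.2 x hx
    obtain ⟨ξ, rfl⟩ := mem_cyl_iff_emb.1 hxc
    rw [tableHomeo_emb hA' hB' hfb (Finset.mem_union_left _ hcFD)]
    have hfbc : fb c = back c := by
      rw [hfbdef]; dsimp only; rw [if_pos hcFD]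
    rw [hfbc]
    exact (push_spec hB heval' (hlenD c hcFD) ξ).symm

end RSU
namespace RSU

variable {Z : Type*}

theorem hmul_apply {X : Type*} [TopologicalSpace X] (a b : X ≃ₜ X) (x : X) :
    (a * b) x = a (b x) := rfl

theorem mapsTo_of_fix {X : Type*} [TopologicalSpace X] {γ : X ≃ₜ X} {U : Set X}
    (h : ∀ x ∉ U, γ x = x) : ∀ x ∈ U, γ x ∈ U := by
  intro x hx
  by_contra hgx
  have h1 : γ (γ x) = γ x := h (γ x) hgx
  have h2 : γ x = x := γ.injective h1
  rw [h2] at hgx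
  exact hgx hx

theorem image_of_fixed {X : Type*} [TopologicalSpace X] {γ : X ≃ₜ X} {S : Set X}
    (h : ∀ x ∈ S, γ x = x) : γ '' S = S := by
  ext x
  constructor
  · rintro ⟨y, hy, rfl⟩
    rw [h y hy]; exact hy
  · intro hx
    exact ⟨x, hx, h x hx⟩

theorem isClopen_himage {X : Type*} [TopologicalSpace X] (γ : X ≃ₜ X) {S : Set X}
    (hS : IsClopen S) : IsClopen (γ '' S) := by
  have : γ '' S = γ.symm ⁻¹' S := by
    ext x
    constructor
    · rintro ⟨y, hy, rfl⟩
      simpa [Homeomorph.symm_apply_apply] using hy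
    · intro hx
      exact ⟨γ.symm x, hx, γ.apply_symm_apply x⟩
  rw [this]
  exact hS.preimage γ.symm.continuous

theorem symm_image_image' {X : Type*} [TopologicalSpace X] (γ : X ≃ₜ X) (S : Set X) :
    γ.symm '' (γ '' S) = S := by
  ext x
  constructor
  · rintro ⟨y, ⟨z, hz, rfl⟩, rfl⟩
    rwa [Homeomorph.symm_apply_apply]
  · intro hx
    exact ⟨γ x, ⟨x, hx, rfl⟩, γ.symm_apply_apply x⟩

end RSU
/-- For clopen subsets `U₁, U₂ ⊆ C_Z` with `U₁ ∩ U₂ ≠ ∅`, the subgroup generated by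
`RiSt_{V_Z}(U₁)` and `RiSt_{V_Z}(U₂)` is `RiSt_{V_Z}(U₁ ∪ U₂)`. -/
theorem rigidStabilizer_union (Z : Type*) [Fintype Z] [Nonempty Z] [TopologicalSpace Z]
    [DiscreteTopology Z] (U₁ U₂ : Set (Cantor × Z))
    (h₁ : IsClopen U₁) (h₂ : IsClopen U₂) (hne : (U₁ ∩ U₂).Nonempty) :
    rigidStabilizer (HigmanThompsonV Z) U₁ ⊔ rigidStabilizer (HigmanThompsonV Z) U₂ =
      rigidStabilizer (HigmanThompsonV Z) (U₁ ∪ U₂) := by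
  classical
  apply le_antisymm
  · refine sup_le ?_ ?_
    · rintro γ ⟨hV, hfix⟩
      exact ⟨hV, fun x hx => hfix x (fun h => hx (Or.inl h))⟩
    · rintro γ ⟨hV, hfix⟩
      exact ⟨hV, fun x hx => hfix x (fun h => hx (Or.inr h))⟩
  rintro γ ⟨hγV, hγfix⟩
  by_cases hYne : (U₂ \ U₁).Nonempty
  swap
  · -- U₂ ⊆ U₁, so γ ∈ RiSt(U₁)
    rw [Set.not_nonempty_iff_eq_empty, Set.diff_eq_empty] at hYne
    refine Subgroup.mem_sup_left ⟨hγV, fun x hx => hγfix x ?_⟩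
    rintro (h | h)
    · exact hx h
    · exact hx (hYne h)
  set Y : Set (Cantor × Z) := U₂ \ U₁ with hYdef
  have hYclopen : IsClopen Y := h₂.diff h₁
  have hYsubU₂ : Y ⊆ U₂ := Set.diff_subset
  obtain ⟨Wa, Wb, Wc, ⟨hWa, hWane, hWaW⟩, ⟨hWb, hWbne, hWbW⟩, ⟨hWc, hWcne, hWcW⟩,
    hab, hac, hbc⟩ := RSU.exists_three (h₁.inter h₂) hne
  have hWaU₁ : Wa ⊆ U₁ := fun x hx => (hWaW hx).1
  have hWaU₂ : Wa ⊆ U₂ := fun x hx => (hWaW hx).2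
  have hWbU₁ : Wb ⊆ U₁ := fun x hx => (hWbW hx).1
  have hWbU₂ : Wb ⊆ U₂ := fun x hx => (hWbW hx).2
  have hWcU₁ : Wc ⊆ U₁ := fun x hx => (hWcW hx).1
  have hWcU₂ : Wc ⊆ U₂ := fun x hx => (hWcW hx).2
  -- choose a small clopen S ⊆ Wa whose γ-image contains neither U₁ nor U₂
  obtain ⟨S₁, S₂, S₃, ⟨hS₁, hS₁ne, hS₁W⟩, ⟨hS₂, hS₂ne, hS₂W⟩, ⟨hS₃, hS₃ne, hS₃W⟩,
    h12, h13, h23⟩ := RSU.exists_three hWa hWane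
  have hU₁ne : U₁.Nonempty := ⟨hne.choose, hne.choose_spec.1⟩
  have hU₂ne : U₂.Nonempty := ⟨hne.choose, hne.choose_spec.2⟩
  have hcontr : ∀ (T T' Uk : Set (Cantor × Z)), Uk.Nonempty → Disjoint T T' →
      Uk ⊆ γ '' T → Uk ⊆ γ '' T' → False := by
    intro T T' Uk hUkne hd hs hs'
    obtain ⟨x, hx⟩ := hUkne
    exact Set.disjoint_left.1 ((Set.disjoint_image_iff γ.injective).2 hd) (hs hx) (hs' hx)
  have hkey : ∃ S : Set (Cantor × Z), IsClopen S ∧ S.Nonempty ∧ S ⊆ Wa ∧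
      ¬ U₁ ⊆ γ '' S ∧ ¬ U₂ ⊆ γ '' S := by
    by_cases c₁ : U₁ ⊆ γ '' S₁ ∨ U₂ ⊆ γ '' S₁
    · by_cases c₂ : U₁ ⊆ γ '' S₂ ∨ U₂ ⊆ γ '' S₂
      · by_cases c₃ : U₁ ⊆ γ '' S₃ ∨ U₂ ⊆ γ '' S₃
        · exfalso
          rcases c₁ with k₁ | k₁ <;> rcases c₂ with k₂ | k₂ <;> rcases c₃ with k₃ | k₃
          · exact hcontr _ _ _ hU₁ne h12 k₁ k₂
          · exact hcontr _ _ _ hU₁ne h12 k₁ k₂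
          · exact hcontr _ _ _ hU₁ne h13 k₁ k₃
          · exact hcontr _ _ _ hU₂ne h23 k₂ k₃
          · exact hcontr _ _ _ hU₁ne h23 k₂ k₃
          · exact hcontr _ _ _ hU₂ne h13 k₁ k₃
          · exact hcontr _ _ _ hU₂ne h12 k₁ k₂
          · exact hcontr _ _ _ hU₂ne h12 k₁ k₂
        · push_neg at c₃
          exact ⟨S₃, hS₃, hS₃ne, hS₃W, c₃.1, c₃.2⟩
      · push_neg at c₂
        exact ⟨S₂, hS₂, hS₂ne, hS₂W, c₂.1, c₂.2⟩
    · push_neg at c₁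
      exact ⟨S₁, hS₁, hS₁ne, hS₁W, c₁.1, c₁.2⟩
  obtain ⟨S, hS, hSne, hSWa, hnU₁, hnU₂⟩ := hkey
  -- step 1: α ∈ RiSt(U₂) with α '' Y = S
  obtain ⟨α, hαV, hαfix, hαY⟩ := RSU.exists_transport h₂ hYclopen hS hYsubU₂
    (hSWa.trans hWaU₂) hYne hSne
    ⟨hne.choose, hne.choose_spec.2, fun hy => hy.2 hne.choose_spec.1⟩
    (by
      obtain ⟨x, hx⟩ := hWbne
      exact ⟨x, hWbU₂ hx, fun hxS => Set.disjoint_left.1 hab (hSWa hxS) hx⟩)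
  set T : Set (Cantor × Z) := γ '' S with hTdef
  have hTclopen : IsClopen T := RSU.isClopen_himage γ hS
  have hTne : T.Nonempty := hSne.image _
  have hTsub : T ⊆ U₁ ∪ U₂ := by
    rintro x ⟨y, hy, rfl⟩
    exact RSU.mapsTo_of_fix hγfix y (Or.inl ((hSWa.trans hWaU₁) hy))
  -- step 2a: c ∈ RiSt(U₂) with c '' T = T₂ ⊆ U₁
  obtain ⟨c, T₂, hcV, hcfix, hcT, hT₂U₁, hT₂clopen, hT₂ne, hWcT₂⟩ :
      ∃ (c : (Cantor × Z) ≃ₜ (Cantor × Z)) (T₂ : Set (Cantor × Z)),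
        c ∈ HigmanThompsonV Z ∧ (∀ x ∉ U₂, c x = x) ∧ c '' T = T₂ ∧ T₂ ⊆ U₁ ∧
        IsClopen T₂ ∧ T₂.Nonempty ∧ Disjoint Wc T₂ := by
    by_cases hTU₂ : (T ∩ U₂).Nonempty
    · obtain ⟨c, hcV, hcfix, hcimg⟩ := RSU.exists_transport h₂ (hTclopen.inter h₂) hWb
        Set.inter_subset_right hWbU₂ hTU₂ hWbne
        (by
          obtain ⟨x, hxU₂, hxT⟩ : ∃ x, x ∈ U₂ ∧ x ∉ T := by
            by_contra hcon
            push_neg at hcon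
            exact hnU₂ hcon
          exact ⟨x, hxU₂, fun h => hxT h.1⟩)
        (by
          obtain ⟨x, hx⟩ := hWane
          exact ⟨x, hWaU₂ hx, fun hxWb => Set.disjoint_left.1 hab hx hxWb⟩)
      refine ⟨c, Wb ∪ (T \ U₂), hcV, hcfix, ?_, ?_, ?_, ?_, ?_⟩
      · have hsplit : T = (T ∩ U₂) ∪ (T \ U₂) := by
          ext x
          constructor
          · intro hx
            by_cases hxU : x ∈ U₂
            · exact Or.inl ⟨hx, hxU⟩
            · exact Or.inr ⟨hx, hxU⟩
          · rintro (hx | hx) <;> exact hx.1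
        conv_lhs => rw [hsplit]
        rw [Set.image_union, hcimg, RSU.image_of_fixed (fun x hx => hcfix x hx.2)]
      · rintro x (hx | hx)
        · exact hWbU₁ hx
        · rcases hTsub hx.1 with h | h
          · exact h
          · exact absurd h hx.2
      · exact hWb.union (hTclopen.diff h₂)
      · exact ⟨hWbne.choose, Or.inl hWbne.choose_spec⟩
      · rw [Set.disjoint_union_right]
        exact ⟨hbc.symm, Set.disjoint_left.2 fun x hx hx' => hx'.2 (hWcU₂ hx)⟩
    · rw [Set.not_nonempty_iff_eq_empty] at hTU₂
      refine ⟨1, T, (HigmanThompsonV Z).one_mem, fun _ _ => rfl, ?_, ?_, hTclopen, hTne, ?_⟩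
      · exact RSU.image_of_fixed (fun _ _ => rfl)
      · intro x hx
        rcases hTsub hx with h | h
        · exact h
        · exact absurd (Set.mem_inter hx h) (by rw [hTU₂]; exact Set.notMem_empty x)
      · exact Set.disjoint_left.2 fun x hx hxT =>
          Set.eq_empty_iff_forall_notMem.1 hTU₂ x ⟨hxT, hWcU₂ hx⟩
  -- step 2b: d ∈ RiSt(U₁) with d '' T₂ = Wc
  obtain ⟨d, hdV, hdfix, hdT₂⟩ := RSU.exists_transport h₁ hT₂clopen hWc hT₂U₁ hWcU₁
    hT₂ne hWcne
    (by
      obtain ⟨x, hx⟩ := hWcne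
      exact ⟨x, hWcU₁ hx, fun hxT₂ => Set.disjoint_left.1 hWcT₂ hx hxT₂⟩)
    (by
      obtain ⟨x, hx⟩ := hWane
      exact ⟨x, hWaU₁ hx, fun hxWc => Set.disjoint_left.1 hac hx hxWc⟩)
  set γ₃ := d * (c * (γ * α)) with hγ₃def
  have hγ₃V : γ₃ ∈ HigmanThompsonV Z :=
    Subgroup.mul_mem _ hdV (Subgroup.mul_mem _ hcV (Subgroup.mul_mem _ hγV hαV))
  have hγ₃Y : γ₃ '' Y = Wc := by
    have hcoe : ⇑γ₃ = ⇑d ∘ ⇑c ∘ ⇑γ ∘ ⇑α := rfl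
    rw [hcoe, Set.image_comp, Set.image_comp, Set.image_comp, hαY, ← hTdef, hcT, hdT₂]
  have hγ₃fixout : ∀ x ∉ U₁ ∪ U₂, γ₃ x = x := by
    intro x hx
    have hx1 : x ∉ U₁ := fun h => hx (Or.inl h)
    have hx2 : x ∉ U₂ := fun h => hx (Or.inr h)
    show d (c (γ (α x))) = x
    rw [hαfix x hx2, hγfix x hx, hcfix x hx2, hdfix x hx1]
  -- step 3: b ∈ RiSt(U₂) agreeing with γ₃⁻¹ on Wc
  have hE : γ₃.symm '' Wc = Y := by
    rw [← hγ₃Y, RSU.symm_image_image']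
  obtain ⟨b, hbV, hbfix, hbD⟩ := RSU.exists_full (RSU.mem_V_iff.1 hγ₃V) h₂ hWc hWcU₂ hWcne
    (by rw [hE]; exact hYsubU₂)
    (by
      obtain ⟨x, hx⟩ := hWbne
      exact ⟨x, hWbU₂ hx, fun hxWc => Set.disjoint_left.1 hbc hx hxWc⟩)
    (by
      rw [hE]
      exact ⟨hne.choose, hne.choose_spec.2, fun hy => hy.2 hne.choose_spec.1⟩)
  set γ₄ := b * γ₃ with hγ₄def
  have hγ₄V : γ₄ ∈ HigmanThompsonV Z := Subgroup.mul_mem _ hbV hγ₃V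
  have hγ₄fix : ∀ x ∉ U₁, γ₄ x = x := by
    intro x hx
    by_cases hx2 : x ∈ U₂
    · have hxY : x ∈ Y := ⟨hx2, hx⟩
      have h1 : γ₃ x ∈ Wc := hγ₃Y ▸ Set.mem_image_of_mem γ₃ hxY
      show b (γ₃ x) = x
      rw [hbD _ h1, Homeomorph.symm_apply_apply]
    · have hxU : x ∉ U₁ ∪ U₂ := by
        rintro (h | h)
        · exact hx h
        · exact hx2 h
      show b (γ₃ x) = x
      rw [hγ₃fixout x hxU, hbfix x hx2]
  -- assemble
  have hγeq : γ = c⁻¹ * (d⁻¹ * (b⁻¹ * γ₄)) * α⁻¹ := by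
    rw [hγ₄def, hγ₃def]
    group
  rw [hγeq]
  have hα2 : α ∈ rigidStabilizer (HigmanThompsonV Z) U₂ := ⟨hαV, hαfix⟩
  have hc2 : c ∈ rigidStabilizer (HigmanThompsonV Z) U₂ := ⟨hcV, hcfix⟩
  have hb2 : b ∈ rigidStabilizer (HigmanThompsonV Z) U₂ := ⟨hbV, hbfix⟩
  have hd1 : d ∈ rigidStabilizer (HigmanThompsonV Z) U₁ := ⟨hdV, hdfix⟩
  have hγ₄1 : γ₄ ∈ rigidStabilizer (HigmanThompsonV Z) U₁ := ⟨hγ₄V, hγ₄fix⟩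
  exact Subgroup.mul_mem _
    (Subgroup.mul_mem _
      (Subgroup.inv_mem _ (Subgroup.mem_sup_right hc2))
      (Subgroup.mul_mem _
        (Subgroup.inv_mem _ (Subgroup.mem_sup_left hd1))
        (Subgroup.mul_mem _
          (Subgroup.inv_mem _ (Subgroup.mem_sup_right hb2))
          (Subgroup.mem_sup_left hγ₄1))))
    (Subgroup.inv_mem _ (Subgroup.mem_sup_right hα2))

end
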